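/- Let v₁ be a black vertex in a linear black-and-white graph whose current non-trivial component is a path x_k — … — x_1 — v₁ — y_1 — … — y_l (v₁ adjacent to x_1 and y_1). In the graph of the pressing game, no x_i is ever adjacent to any y_j before v₁ is pressed, provided only vertices among {x_i} ∪ {y_j} adjacent to v₁ at their pressing time are pressed; consequently, any valid pressing path consisting of presses of vertices each adjacent to v₁ at its time of pressing, followed by v₁, can be reordered so that all y-vertices are pressed before all x-vertices, the reordering achievable by transpositions of consecutive non-adjacent pressed vertices, each transposition preserving validity and the final graph. -/

import Mathlib

structure BW (V : Type) where
  adj : V → V → Bool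
  black : V → Bool
  symm : ∀ u w, adj u w = adj w u
  irrefl : ∀ v, adj v v = false

variable {V : Type} [DecidableEq V]

/-- Pressing a vertex `v`: neighbors toggle color, pairs of neighbors toggle
adjacency, and `v` becomes white and isolated. -/
def press (G : BW V) (v : V) : BW V where
  adj u w :=
    if u = v ∨ w = v ∨ u = w then false
    else xor (G.adj u w) (G.adj u v && G.adj w v)
  black u := if u = v then false else xor (G.black u) (G.adj u v)
  symm := by
    intro u w
    by_cases h1 : u = v <;> by_cases h2 : w = v <;> by_cases h3 : u = w <;>
      simp_all [G.symm u w, Bool.xor_comm, Bool.and_comm] <;> tauto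
  irrefl := by intro u; simp

/-- The graph obtained after pressing the vertices of a list in order. -/
def pressPath (G : BW V) : List V → BW V
  | [] => G
  | v :: P => pressPath (press G v) P

/-- A pressing path is valid if every vertex is black when it is pressed. -/
def ValidPath (G : BW V) : List V → Prop
  | [] => True
  | v :: P => G.black v = true ∧ ValidPath (press G v) P

/-- The all-white, edgeless graph. -/
def AllWhiteEmpty (G : BW V) : Prop :=
  (∀ v, G.black v = false) ∧ ∀ u w, G.adj u w = false

/-- A successful pressing path: valid and leading to the all-white empty graph. -/
def Successful (G : BW V) (P : List V) : Prop :=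
  ValidPath G P ∧ AllWhiteEmpty (pressPath G P)

/-- The underlying simple graph of a black-and-white graph. -/
def BW.toSimple (G : BW V) : SimpleGraph V where
  Adj u w := G.adj u w = true
  symm := ⟨fun u w h => (G.symm w u).trans h⟩
  loopless := ⟨fun v h => by simp [G.irrefl] at h⟩

/-- `l` enumerates the vertices as a path: `G` is linear with vertex order `l`. -/
def IsPathList (G : BW V) (l : List V) : Prop :=
  l.Nodup ∧ (∀ v, v ∈ l) ∧
    ∀ u w, G.adj u w = true ↔ ∃ i,
      (l[i]? = some u ∧ l[i+1]? = some w) ∨ (l[i]? = some w ∧ l[i+1]? = some u)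

/-- A linear (path) black-and-white graph. -/
def IsLinear (G : BW V) : Prop := ∃ l, IsPathList G l

/-- Adjacency step in the metagraph of successful pressing paths:
their longest common subsequence misses at most 2 presses. -/
def Step (G : BW V) (P Q : List V) : Prop :=
  Successful G P ∧ Successful G Q ∧
    ∃ R : List V, R.Sublist P ∧ R.Sublist Q ∧ P.length ≤ R.length + 2

/-- Transposition of two consecutive presses which are non-adjacent at that moment. -/
def SwapStep (G : BW V) (P Q : List V) : Prop :=
  ∃ A u w B, P = A ++ u :: w :: B ∧ Q = A ++ w :: u :: B ∧
    (pressPath G A).adj u w = false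

/-- The induced black-and-white graph on a subset of the vertices. -/
def BW.restrict (G : BW V) (p : V → Prop) [DecidablePred p] : BW {u // p u} where
  adj u w := G.adj u.1 w.1
  black u := G.black u.1
  symm := fun u w => G.symm u.1 w.1
  irrefl := fun u => G.irrefl u.1

/-- The all-black path graph on `n` vertices. -/
def pathAllBlack (n : ℕ) : BW (Fin n) where
  adj i j := decide (i.1 + 1 = j.1 ∨ j.1 + 1 = i.1)
  black _ := true
  symm := by intro u w; simp [or_comm]
  irrefl := by intro v; simp

section Aux

lemma BW.ext' {G H : BW V} (h1 : G.adj = H.adj) (h2 : G.black = H.black) : G = H := by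
  cases G; cases H; simp_all

lemma press_comm {G : BW V} {u w : V} (h : G.adj u w = false) :
    press (press G u) w = press (press G w) u := by
  by_cases huw : u = w
  · subst huw; rfl
  have hwu : w ≠ u := Ne.symm huw
  have h' : G.adj w u = false := (G.symm w u).trans h
  apply BW.ext'
  · funext a b
    simp only [press]
    by_cases hau : a = u <;> by_cases haw : a = w <;> by_cases hbu : b = u <;>
      by_cases hbw : b = w <;> by_cases hab : a = b <;>
      simp_all [G.irrefl] <;>
      cases hx1 : G.adj a b <;> cases hx2 : G.adj a u <;> cases hx3 : G.adj a w <;>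
      cases hx4 : G.adj b u <;> cases hx5 : G.adj b w <;> simp_all
  · funext a
    simp only [press]
    by_cases hau : a = u <;> by_cases haw : a = w <;> simp_all [G.irrefl] <;>
      cases hx1 : G.black a <;> cases hx2 : G.adj a u <;> cases hx3 : G.adj a w <;> simp_all

lemma press_black_eq {G : BW V} {u w : V} (h : G.adj u w = false) (hne : w ≠ u) :
    (press G u).black w = G.black w := by
  have h' : G.adj w u = false := (G.symm w u).trans h
  simp [press, hne, h']

lemma pressPath_append (G : BW V) (A B : List V) :
    pressPath G (A ++ B) = pressPath (pressPath G A) B := by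
  induction A generalizing G with
  | nil => rfl
  | cons a A ih => simp [pressPath, ih]

lemma validPath_append (G : BW V) (A B : List V) :
    ValidPath G (A ++ B) ↔ ValidPath G A ∧ ValidPath (pressPath G A) B := by
  induction A generalizing G with
  | nil => simp [ValidPath, pressPath]
  | cons a A ih => simp [ValidPath, pressPath, ih, and_assoc]

lemma swapStep_pressPath {G : BW V} {X Y : List V} (h : SwapStep G X Y) :
    pressPath G X = pressPath G Y := by
  obtain ⟨A, u, w, B, rfl, rfl, hadj⟩ := h
  simp only [pressPath_append]
  set H := pressPath G A
  show pressPath H (u :: w :: B) = pressPath H (w :: u :: B)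
  simp only [pressPath, press_comm hadj]

lemma swapStep_valid {G : BW V} {X Y : List V} (h : SwapStep G X Y) :
    ValidPath G X → ValidPath G Y := by
  obtain ⟨A, u, w, B, rfl, rfl, hadj⟩ := h
  simp only [validPath_append]
  rintro ⟨hA, hrest⟩
  refine ⟨hA, ?_⟩
  set H := pressPath G A
  by_cases huw : u = w
  · subst huw; exact hrest
  have hwu : w ≠ u := Ne.symm huw
  have hadj' : H.adj w u = false := (H.symm w u).trans hadj
  obtain ⟨hbu, hbw, htail⟩ : H.black u = true ∧ (press H u).black w = true ∧
      ValidPath (press (press H u) w) B := hrest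
  refine ⟨?_, ?_, ?_⟩
  · rw [← press_black_eq hadj hwu]; exact hbw
  · rw [press_black_eq hadj' huw]; exact hbu
  · rw [← press_comm hadj]; exact htail

lemma rtg_swap_preserve {G : BW V} {X Y : List V}
    (h : Relation.ReflTransGen (SwapStep G) X Y) (hX : ValidPath G X) :
    ValidPath G Y ∧ pressPath G X = pressPath G Y := by
  induction h with
  | refl => exact ⟨hX, rfl⟩
  | tail _ step ih => exact ⟨swapStep_valid step ih.1, ih.2.trans (swapStep_pressPath step)⟩

lemma press_isolated {G : BW V} {u : V} (h : ∀ x, G.adj u x = false) (z x : V) :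
    (press G z).adj u x = false := by
  simp [press, h]

lemma pressPath_isolated {G : BW V} {u : V} (h : ∀ x, G.adj u x = false) (A : List V) :
    ∀ x, (pressPath G A).adj u x = false := by
  induction A generalizing G with
  | nil => exact h
  | cons a A ih => exact ih (press_isolated h a)

lemma pressPath_mem_isolated {G : BW V} {A : List V} {u : V} (h : u ∈ A) :
    ∀ x, (pressPath G A).adj u x = false := by
  induction A generalizing G with
  | nil => cases h
  | cons a A ih =>
    rcases List.mem_cons.1 h with rfl | h
    · exact pressPath_isolated (fun x => by simp [press]) A
    · exact ih h

/-- The key invariant: no edge crosses `v₁` except edges incident to `v₁`. -/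
def NoCross (l : List V) (v₁ : V) (H : BW V) : Prop :=
  ∀ u w, H.adj u w = true → u = v₁ ∨ w = v₁ ∨
    (l.idxOf u < l.idxOf v₁ ↔ l.idxOf w < l.idxOf v₁)

lemma noCross_press {l : List V} {v₁ : V} {H : BW V} (hH : NoCross l v₁ H) {z : V}
    (hz : z ≠ v₁) : NoCross l v₁ (press H z) := by
  intro u w h
  by_cases c : u = z ∨ w = z ∨ u = w
  · simp only [press, if_pos c] at h
    exact absurd h (by simp)
  · simp only [press, if_neg c] at h
    cases h1 : H.adj u w with
    | true => exact hH u w h1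
    | false =>
      have h2 : H.adj u z = true ∧ H.adj w z = true := by
        cases h2 : H.adj u z <;> cases h3 : H.adj w z <;> simp_all
      rcases hH u z h2.1 with rfl | rfl | e1
      · exact Or.inl rfl
      · exact absurd rfl hz
      rcases hH w z h2.2 with rfl | rfl | e2
      · exact Or.inr (Or.inl rfl)
      · exact absurd rfl hz
      exact Or.inr (Or.inr (e1.trans e2.symm))

lemma noCross_pressPath {l : List V} {v₁ : V} {H : BW V} (hH : NoCross l v₁ H)
    {A : List V} (hA : ∀ x ∈ A, x ≠ v₁) : NoCross l v₁ (pressPath H A) := by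
  induction A generalizing H with
  | nil => exact hH
  | cons a A ih =>
    exact ih (noCross_press hH (hA a (List.mem_cons_self)))
      (fun x hx => hA x (List.mem_cons_of_mem a hx))

lemma noCross_base {G : BW V} {l : List V} (hl : IsPathList G l) (v₁ : V) :
    NoCross l v₁ G := by
  intro u w h
  by_cases hu : u = v₁
  · exact Or.inl hu
  by_cases hw : w = v₁
  · exact Or.inr (Or.inl hw)
  refine Or.inr (Or.inr ?_)
  obtain ⟨i, hi⟩ := (hl.2.2 u w).1 h
  have key : ∀ a b : V, a ≠ v₁ → b ≠ v₁ → l[i]? = some a → l[i+1]? = some b →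
      (l.idxOf a < l.idxOf v₁ ↔ l.idxOf b < l.idxOf v₁) := by
    intro a b ha hb hia hib
    obtain ⟨h1, h2⟩ := List.getElem?_eq_some_iff.1 hia
    obtain ⟨h3, h4⟩ := List.getElem?_eq_some_iff.1 hib
    have e1 : l.idxOf a = i := by rw [← h2]; exact hl.1.idxOf_getElem i h1
    have e2 : l.idxOf b = i + 1 := by rw [← h4]; exact hl.1.idxOf_getElem (i+1) h3
    have n1 : l.idxOf a ≠ l.idxOf v₁ :=
      fun e => ha ((List.idxOf_inj (hl.2.1 a)).1 e)
    have n2 : l.idxOf b ≠ l.idxOf v₁ :=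
      fun e => hb ((List.idxOf_inj (hl.2.1 b)).1 e)
    omega
  rcases hi with ⟨hia, hib⟩ | ⟨hia, hib⟩
  · exact key u w hu hw hia hib
  · exact (key w u hw hu hia hib).symm

lemma noCross_false {G : BW V} {l : List V} (hl : IsPathList G l) {v₁ : V}
    {A : List V} (hA : ∀ x ∈ A, x ≠ v₁) {u w : V}
    (hu : l.idxOf u < l.idxOf v₁) (hw : l.idxOf v₁ < l.idxOf w) :
    (pressPath G A).adj u w = false := by
  cases h : (pressPath G A).adj u w with
  | false => rfl
  | true =>
    exfalso
    rcases noCross_pressPath (noCross_base hl v₁) hA u w h with rfl | rfl | e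
    · omega
    · omega
    · omega

section Sorting

variable {α : Type}

lemma bubble_one (S : List α → List α → Prop) (p : α → Bool) (c : α → Prop)
    (hS : ∀ A u w B, (∀ x ∈ A, c x) → c u → c w → p u = false → p w = true →
      S (A ++ u :: w :: B) (A ++ w :: u :: B))
    (a : α) (hca : c a) (hpa : p a = false) :
    ∀ (R : List α), (∀ x ∈ R, c x ∧ p x = true) → ∀ (C D : List α), (∀ x ∈ C, c x) →
      Relation.ReflTransGen S (C ++ a :: (R ++ D)) (C ++ (R ++ a :: D)) := by
  intro R
  induction R with
  | nil => intro _ C D _; exact Relation.ReflTransGen.refl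
  | cons w R ih =>
    intro hR C D hC
    have step : S (C ++ a :: w :: (R ++ D)) (C ++ w :: a :: (R ++ D)) :=
      hS C a w (R ++ D) hC hca (hR w (List.mem_cons_self)).1 hpa
        (hR w (List.mem_cons_self)).2
    refine Relation.ReflTransGen.head step ?_
    have h2 := ih (fun x hx => hR x (List.mem_cons_of_mem w hx)) (C ++ [w]) D
      (by intro x hx
          rcases List.mem_append.1 hx with h | h
          · exact hC x h
          · rcases List.mem_singleton.1 h with rfl
            exact (hR x (List.mem_cons_self)).1)
    simpa using h2

lemma sort_aux (S : List α → List α → Prop) (p : α → Bool) (c : α → Prop)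
    (hS : ∀ A u w B, (∀ x ∈ A, c x) → c u → c w → p u = false → p w = true →
      S (A ++ u :: w :: B) (A ++ w :: u :: B)) :
    ∀ (T C : List α), (∀ x ∈ C, c x) → (∀ x ∈ T, c x) →
      Relation.ReflTransGen S (C ++ T)
        (C ++ (T.filter p ++ T.filter (fun x => !p x))) := by
  intro T
  induction T with
  | nil => intro C _ _; exact Relation.ReflTransGen.refl
  | cons a T ih =>
    intro C hC hT
    have hca : c a := hT a (List.mem_cons_self)
    have h1 := ih (C ++ [a])
      (by intro x hx
          rcases List.mem_append.1 hx with h | h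
          · exact hC x h
          · rcases List.mem_singleton.1 h with rfl; exact hca)
      (fun x hx => hT x (List.mem_cons_of_mem a hx))
    cases hpa : p a with
    | true =>
      have : Relation.ReflTransGen S (C ++ a :: T)
          (C ++ (a :: (T.filter p ++ T.filter (fun x => !p x)))) := by simpa using h1
      simpa [List.filter_cons, hpa] using this
    | false =>
      have h2 := bubble_one S p c hS a hca hpa (T.filter p)
        (by intro x hx
            have := List.mem_filter.1 hx
            exact ⟨hT x (List.mem_cons_of_mem a this.1), this.2⟩)
        C (T.filter (fun x => !p x)) hC
      have h1' : Relation.ReflTransGen S (C ++ a :: T)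
          (C ++ a :: (T.filter p ++ T.filter (fun x => !p x))) := by simpa using h1
      have h3 := h1'.trans h2
      simpa [List.filter_cons, hpa] using h3

end Sorting

lemma swapStep_append {G : BW V} {X Y : List V} (h : SwapStep G X Y) (C : List V) :
    SwapStep G (X ++ C) (Y ++ C) := by
  obtain ⟨A, u, w, B, rfl, rfl, hadj⟩ := h
  exact ⟨A, u, w, B ++ C, by simp, by simp, hadj⟩

end Aux

/-- In a linear graph with vertex order `l`, during a valid pressing path whose
presses are all adjacent to `v₁` at their time of pressing and which ends with
`v₁`: vertices on the left of `v₁` are never adjacent to vertices on the right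
of `v₁`; consequently the path can be reordered, by transpositions of
consecutive non-adjacent presses, so that all right-side vertices are pressed
before all left-side vertices, preserving validity and the final graph. -/
theorem stmt15 {V : Type} [DecidableEq V] (G : BW V) (l : List V)
    (hl : IsPathList G l) (v₁ : V) (P : List V)
    (hvalid : ValidPath G (P ++ [v₁]))
    (hadjtime : ∀ A u B, P = A ++ u :: B → (pressPath G A).adj u v₁ = true) :
    (∀ A B, P ++ [v₁] = A ++ B → ∀ u w, u ∈ P → w ∈ P →
        l.idxOf u < l.idxOf v₁ → l.idxOf v₁ < l.idxOf w →
        (pressPath G A).adj u w = false) ∧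
    ∃ Q : List V,
      Q = P.filter (fun u => decide (l.idxOf v₁ < l.idxOf u)) ++
          P.filter (fun u => decide (l.idxOf u < l.idxOf v₁)) ∧
      Relation.ReflTransGen (SwapStep G) (P ++ [v₁]) (Q ++ [v₁]) ∧
      ValidPath G (Q ++ [v₁]) ∧
      pressPath G (Q ++ [v₁]) = pressPath G (P ++ [v₁]) := by
  classical
  have hPne : ∀ x ∈ P, x ≠ v₁ := by
    intro x hx
    obtain ⟨A, B, rfl⟩ := List.append_of_mem hx
    have h := hadjtime A x B rfl
    intro e
    rw [e, (pressPath G A).irrefl] at h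
    exact absurd h (by simp)
  constructor
  · intro A B hAB u w hu hw hlu hlw
    have hA : A = (P ++ [v₁]).take A.length := by rw [hAB, List.take_left]
    by_cases hlen : A.length ≤ P.length
    · have hA' : A = P.take A.length := by
        conv_lhs => rw [hA, List.take_append_of_le_length hlen]
      apply noCross_false hl _ hlu hlw
      intro x hx
      rw [hA'] at hx
      exact hPne x (List.mem_of_mem_take hx)
    · have hlens := congrArg List.length hAB
      simp only [List.length_append, List.length_cons, List.length_nil] at hlens
      have hB : B = [] := List.length_eq_zero_iff.1 (by omega)
      subst hB
      have hA2 : A = P ++ [v₁] := by simpa using hAB.symm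
      subst hA2
      exact pressPath_mem_isolated (List.mem_append_left _ hu) w
  · set k := l.idxOf v₁ with hk
    set p : V → Bool := fun u => decide (k < l.idxOf u) with hp
    set q : V → Bool := fun u => decide (l.idxOf u < k) with hq
    have hfil : P.filter q = P.filter (fun x => !p x) := by
      apply List.filter_congr
      intro x hx
      have hne : l.idxOf x ≠ k := fun e =>
        hPne x hx ((List.idxOf_inj (hl.2.1 x)).1 e)
      simp only [hp, hq, ← decide_not, decide_eq_decide]
      omega
    have hS : ∀ A u w B, (∀ x ∈ A, x ≠ v₁) → u ≠ v₁ → w ≠ v₁ → p u = false → p w = true →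
        SwapStep G (A ++ u :: w :: B) (A ++ w :: u :: B) := by
      intro A u w B hA hu hw hpu hpw
      have hneu : l.idxOf u ≠ k := fun e =>
        hu ((List.idxOf_inj (hl.2.1 u)).1 e)
      have h1 : ¬ (k < l.idxOf u) := by simpa [hp] using hpu
      have hu' : l.idxOf u < k := by omega
      have hw' : k < l.idxOf w := by simpa [hp] using hpw
      exact ⟨A, u, w, B, rfl, rfl, noCross_false hl hA hu' hw'⟩
    have hrtg0 := sort_aux (SwapStep G) p (fun x => x ≠ v₁) hS P [] (by simp) hPne
    have hrtg : Relation.ReflTransGen (SwapStep G) (P ++ [v₁])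
        ((P.filter p ++ P.filter q) ++ [v₁]) := by
      rw [hfil]
      exact Relation.ReflTransGen.lift (r := SwapStep G) (p := SwapStep G) (fun X => X ++ [v₁])
        (fun a b h => swapStep_append h [v₁]) _ _ (by simpa using hrtg0)
    obtain ⟨hv, hpp⟩ := rtg_swap_preserve hrtg hvalid
    exact ⟨P.filter p ++ P.filter q, rfl, hrtg, hv, hpp.symm⟩
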